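/- (Infrared divergence criterion for the mean particle number of the test functions f_α.) For all β > 0 and α > 0, the integral ∫₀^∞ p^{2α−1}·e^{−2p²}/(e^{βp}−1) dp is finite if and only if α > 1/2; equivalently, for the relativistic black hole with M > 0 (β = 2π/M), the mean number of spontaneously created particles N̄₀[f_α] = C_α²·∫₀^∞ (dp/(2p))·(p^α e^{−p²})²/(e^{2πp/M}−1) for the test function f̂_α(p) = C_α·θ(p)·p^α·e^{−p²} (C_α > 0 a normalization constant) is infinite if and only if α ≤ 1/2. -/

import Mathlib

open MeasureTheory Set

-- exp x - 1 ≤ x * exp x for x ≥ 0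
lemma exp_sub_one_le (x : ℝ) : Real.exp x - 1 ≤ x * Real.exp x := by
  have h := Real.add_one_le_exp (-x)
  rw [Real.exp_neg x] at h
  have h2 := mul_le_mul_of_nonneg_right h (Real.exp_pos x).le
  rw [inv_mul_cancel₀ (ne_of_gt (Real.exp_pos x))] at h2
  nlinarith

lemma aux_main (β : ℝ) (hβ : 0 < β) (α : ℝ) (hα : 0 < α) :
    IntegrableOn (fun p : ℝ =>
        p ^ (2 * α - 1) * Real.exp (-(2 * p ^ 2)) / (Real.exp (β * p) - 1))
      (Set.Ioi 0) ↔ α > 1 / 2 := by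
  set f : ℝ → ℝ := fun p =>
    p ^ (2 * α - 1) * Real.exp (-(2 * p ^ 2)) / (Real.exp (β * p) - 1) with hf
  have hDpos : ∀ p : ℝ, 0 < p → 0 < Real.exp (β * p) - 1 := by
    intro p hp
    have : (1:ℝ) < Real.exp (β * p) := by
      rw [show (1:ℝ) = Real.exp 0 by simp]
      exact Real.exp_lt_exp.mpr (by positivity)
    linarith
  have hfnn : ∀ p ∈ Ioi (0:ℝ), 0 ≤ f p := by
    intro p hp
    have hp : (0:ℝ) < p := hp
    have := hDpos p hp
    have h1 : (0:ℝ) ≤ p ^ (2 * α - 1) := Real.rpow_nonneg hp.le _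
    positivity
  have hcont : ContinuousOn f (Ioi 0) := by
    apply ContinuousOn.div
    · apply ContinuousOn.mul
      · exact fun p hp => (Real.continuousAt_rpow_const p _ (Or.inl (ne_of_gt hp))).continuousWithinAt
      · exact (Real.continuous_exp.comp (by continuity)).continuousOn
    · exact (Real.continuous_exp.comp (continuous_const.mul continuous_id)).continuousOn.sub
        continuousOn_const
    · exact fun p hp => ne_of_gt (hDpos p hp)
  constructor
  · intro h
    by_contra hle
    push_neg at hle
    -- then p^(2α-2) ≤ c * f p on Ioo 0 1, so p^(2α-2) integrable, contradiction
    set c : ℝ := β * Real.exp (β + 2) with hc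
    have hcpos : 0 < c := by positivity
    have hgint : IntegrableOn (fun p : ℝ => p ^ (2 * α - 2)) (Ioo 0 1) := by
      apply Integrable.mono' ((h.mono_set Ioo_subset_Ioi_self).const_mul c)
      · exact (ContinuousOn.aestronglyMeasurable (fun p hp =>
          (Real.continuousAt_rpow_const p _ (Or.inl (ne_of_gt hp.1))).continuousWithinAt)
          measurableSet_Ioo)
      · filter_upwards [ae_restrict_mem measurableSet_Ioo] with p hp
        obtain ⟨hp0, hp1⟩ := hp
        have hD := hDpos p hp0
        rw [Real.norm_eq_abs, abs_of_nonneg (Real.rpow_nonneg hp0.le _)]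
        simp only [hf]
        rw [← mul_div_assoc, le_div_iff₀ hD, mul_comm c]
        calc p ^ (2 * α - 2) * (Real.exp (β * p) - 1)
            ≤ p ^ (2 * α - 2) * (β * p * Real.exp β) := by
              apply mul_le_mul_of_nonneg_left _ (Real.rpow_nonneg hp0.le _)
              calc Real.exp (β * p) - 1 ≤ β * p * Real.exp (β * p) := exp_sub_one_le _
                _ ≤ β * p * Real.exp β := by
                    apply mul_le_mul_of_nonneg_left _ (by positivity)
                    exact Real.exp_le_exp.mpr (by nlinarith)
          _ = β * Real.exp β * (p ^ (2 * α - 2) * p) := by ring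
          _ = β * Real.exp β * p ^ (2 * α - 1) := by
              rw [← Real.rpow_add_one (ne_of_gt hp0)]; ring_nf
          _ ≤ p ^ (2 * α - 1) * Real.exp (-(2 * p ^ 2)) * c := by
              rw [hc]
              have h1 : Real.exp (-(2:ℝ)) ≤ Real.exp (-(2 * p ^ 2)) :=
                Real.exp_le_exp.mpr (by nlinarith)
              have h2 : β * Real.exp (β + 2) * Real.exp (-(2:ℝ)) = β * Real.exp β := by
                rw [mul_assoc, ← Real.exp_add, show β + 2 + -2 = β by ring]
              calc β * Real.exp β * p ^ (2 * α - 1)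
                  = p ^ (2 * α - 1) * Real.exp (-(2:ℝ)) * (β * Real.exp (β + 2)) := by
                    linear_combination (-(p ^ (2 * α - 1))) * h2
                _ ≤ p ^ (2 * α - 1) * Real.exp (-(2 * p ^ 2)) * (β * Real.exp (β + 2)) := by
                    apply mul_le_mul_of_nonneg_right _ (by positivity)
                    exact mul_le_mul_of_nonneg_left h1 (Real.rpow_nonneg hp0.le _)
    rw [intervalIntegral.integrableOn_Ioo_rpow_iff one_pos] at hgint
    linarith
  · intro hα2
    have hsplit : Ioi (0:ℝ) = Ioo 0 1 ∪ Ici 1 := (Ioo_union_Ici_eq_Ioi one_pos).symm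
    rw [hsplit]
    apply IntegrableOn.union
    · -- on Ioo 0 1 : |f| ≤ β⁻¹ * p^(2α-2)
      have hbound : IntegrableOn (fun p : ℝ => β⁻¹ * p ^ (2 * α - 2)) (Ioo 0 1) :=
        ((intervalIntegral.integrableOn_Ioo_rpow_iff one_pos).mpr
          (by linarith : (-1:ℝ) < 2 * α - 2)).const_mul β⁻¹
      apply Integrable.mono' hbound
        ((hcont.mono Ioo_subset_Ioi_self).aestronglyMeasurable measurableSet_Ioo)
      filter_upwards [ae_restrict_mem measurableSet_Ioo] with p hp
      obtain ⟨hp0, hp1⟩ := hp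
      have hD := hDpos p hp0
      rw [Real.norm_eq_abs, abs_of_nonneg (hfnn p hp0)]
      simp only [hf]
      rw [div_le_iff₀ hD]
      have hDge : β * p ≤ Real.exp (β * p) - 1 := by
        have := Real.add_one_le_exp (β * p); linarith
      calc p ^ (2 * α - 1) * Real.exp (-(2 * p ^ 2))
          ≤ p ^ (2 * α - 1) * 1 := by
            apply mul_le_mul_of_nonneg_left _ (Real.rpow_nonneg hp0.le _)
            exact Real.exp_le_one_iff.mpr (by nlinarith)
        _ = p ^ (2 * α - 2) * p := by
            rw [mul_one, ← Real.rpow_add_one (ne_of_gt hp0)]; ring_nf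
        _ = β⁻¹ * p ^ (2 * α - 2) * (β * p) := by
            field_simp
        _ ≤ β⁻¹ * p ^ (2 * α - 2) * (Real.exp (β * p) - 1) := by
            apply mul_le_mul_of_nonneg_left hDge
            positivity
    · -- on Ici 1
      have hint : IntegrableOn (fun x : ℝ => x ^ (2 * α - 1) * Real.exp (-x ^ (2:ℝ))) (Ioi 0) :=
        integrableOn_rpow_mul_exp_neg_rpow (by linarith) two_pos
      have hEβ : 0 < Real.exp β - 1 := hDpos 1 one_pos |>.trans_le (by rw [mul_one])
      have hbd : IntegrableOn (fun x : ℝ =>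
          (Real.exp β - 1)⁻¹ * (x ^ (2 * α - 1) * Real.exp (-x ^ (2:ℝ)))) (Ici 1) :=
        ((hint.mono_set (show Ici (1:ℝ) ⊆ Ioi 0 from fun x hx => mem_Ioi.mpr (lt_of_lt_of_le one_pos (mem_Ici.mp hx)))).const_mul _)
      apply Integrable.mono' hbd
        ((hcont.mono (show Ici (1:ℝ) ⊆ Ioi 0 from fun x hx => mem_Ioi.mpr (lt_of_lt_of_le one_pos (mem_Ici.mp hx)))).aestronglyMeasurable
          measurableSet_Ici)
      filter_upwards [ae_restrict_mem measurableSet_Ici] with p hp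
      have hp0 : (0:ℝ) < p := lt_of_lt_of_le one_pos hp
      have hD := hDpos p hp0
      rw [Real.norm_eq_abs, abs_of_nonneg (hfnn p hp0)]
      simp only [hf]
      have hDge : Real.exp β - 1 ≤ Real.exp (β * p) - 1 := by
        have hp1 : (1:ℝ) ≤ p := hp
        have : Real.exp β ≤ Real.exp (β * p) := Real.exp_le_exp.mpr (by nlinarith)
        linarith
      have hrp : p ^ ((2:ℝ)) = p ^ (2:ℕ) := by
        rw [← Real.rpow_natCast p 2]; norm_num
      have hnum : p ^ (2 * α - 1) * Real.exp (-(2 * p ^ 2))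
          ≤ p ^ (2 * α - 1) * Real.exp (-p ^ (2:ℝ)) := by
        apply mul_le_mul_of_nonneg_left _ (Real.rpow_nonneg hp0.le _)
        apply Real.exp_le_exp.mpr
        rw [hrp]; nlinarith
      calc p ^ (2 * α - 1) * Real.exp (-(2 * p ^ 2)) / (Real.exp (β * p) - 1)
          ≤ p ^ (2 * α - 1) * Real.exp (-(2 * p ^ 2)) / (Real.exp β - 1) := by
            exact div_le_div_of_nonneg_left
              (mul_nonneg (Real.rpow_nonneg hp0.le _) (Real.exp_pos _).le) hEβ hDge
        _ ≤ (Real.exp β - 1)⁻¹ * (p ^ (2 * α - 1) * Real.exp (-p ^ (2:ℝ))) := by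
            rw [div_eq_inv_mul]
            exact mul_le_mul_of_nonneg_left hnum (by positivity)

theorem stmt19 :
    (∀ β : ℝ, 0 < β → ∀ α : ℝ, 0 < α →
      (IntegrableOn (fun p : ℝ =>
          p ^ (2 * α - 1) * Real.exp (-(2 * p ^ 2)) / (Real.exp (β * p) - 1))
        (Set.Ioi 0) ↔ α > 1 / 2)) ∧
    (∀ M : ℝ, 0 < M → ∀ α : ℝ, 0 < α → ∀ C : ℝ, 0 < C →
      (¬ IntegrableOn (fun p : ℝ =>
          C ^ 2 * (p ^ α * Real.exp (-(p ^ 2))) ^ 2 /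
            ((Real.exp (2 * Real.pi * p / M) - 1) * (2 * p)))
        (Set.Ioi 0) ↔ α ≤ 1 / 2)) := by
  constructor
  · exact aux_main
  · intro M hM α hα C hC
    have hβ : 0 < 2 * Real.pi / M := by positivity
    have key := aux_main (2 * Real.pi / M) hβ α hα
    have heq : EqOn (fun p : ℝ =>
          C ^ 2 * (p ^ α * Real.exp (-(p ^ 2))) ^ 2 /
            ((Real.exp (2 * Real.pi * p / M) - 1) * (2 * p)))
        (fun p : ℝ => (C ^ 2 / 2) *
          (p ^ (2 * α - 1) * Real.exp (-(2 * p ^ 2)) / (Real.exp (2 * Real.pi / M * p) - 1)))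
        (Ioi 0) := by
      intro p hp
      have hp0 : (0:ℝ) < p := hp
      have h1 : (p ^ α * Real.exp (-(p ^ 2))) ^ 2 = p ^ (2 * α) * Real.exp (-(2 * p ^ 2)) := by
        rw [mul_pow, ← Real.rpow_natCast (p ^ α) 2, ← Real.rpow_mul hp0.le,
          ← Real.exp_nat_mul]
        norm_num; ring_nf
      have h2 : p ^ (2 * α) = p ^ (2 * α - 1) * p := by
        rw [← Real.rpow_add_one (ne_of_gt hp0)]; ring_nf
      have h3 : 2 * Real.pi * p / M = 2 * Real.pi / M * p := by ring
      have hD : Real.exp (2 * Real.pi / M * p) - 1 ≠ 0 := by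
        have : (1:ℝ) < Real.exp (2 * Real.pi / M * p) := by
          rw [show (1:ℝ) = Real.exp 0 by simp]
          exact Real.exp_lt_exp.mpr (by positivity)
        linarith
      simp only [h1, h2, h3]
      rw [← mul_div_assoc, div_eq_div_iff (mul_ne_zero hD (by positivity)) hD]
      ring
    rw [integrableOn_congr_fun heq measurableSet_Ioi]
    have hC2 : (C ^ 2 / 2 : ℝ) ≠ 0 := by positivity
    have hiff : IntegrableOn (fun p : ℝ => C ^ 2 / 2 *
          (p ^ (2 * α - 1) * Real.exp (-(2 * p ^ 2)) /
            (Real.exp (2 * Real.pi / M * p) - 1))) (Ioi 0) ↔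
        IntegrableOn (fun p : ℝ => p ^ (2 * α - 1) * Real.exp (-(2 * p ^ 2)) /
            (Real.exp (2 * Real.pi / M * p) - 1)) (Ioi 0) :=
      integrable_const_mul_iff (isUnit_iff_ne_zero.mpr hC2) _
    rw [hiff, key]
    exact not_lt
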